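/- Let f(q) = qⁿ + q^p·a_p + ⋯ + q·a₁ + a₀ with 0 ≤ p ≤ n−1 be a monic quaternion polynomial and r > 0 a real number. Then every zero q of f satisfies |q| ≤ max{ r, Σ_{k=1}^{n} |a_(n−k)| / r^(k−1) } (where a_j = 0 for j > p). -/

import Mathlib

open scoped Quaternion

/-- Intermediate Geršgorin-type bound: for any `r > 0`, every zero of
`f(q) = q^n + q^p a_p + ⋯ + a₀` (with `a_j = 0` for `j > p`) satisfies
`‖q‖ ≤ max { r, ∑_{k=1}^n ‖a_{n-k}‖ / r^(k-1) }`. -/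
theorem stmt_15 (n p : ℕ) (hpn : p < n) (a : ℕ → ℍ[ℝ])
    (ha0 : ∀ j, p < j → a j = 0) (r : ℝ) (hr : 0 < r)
    (q : ℍ[ℝ]) (hq : q ^ n + ∑ ν ∈ Finset.range (p + 1), q ^ ν * a ν = 0) :
    ‖q‖ ≤ max r (∑ k ∈ Finset.Icc 1 n, ‖a (n - k)‖ / r ^ (k - 1)) := by
  rcases le_or_gt ‖q‖ r with h | h
  · exact le_max_of_le_left h
  have hq0 : (0:ℝ) < ‖q‖ := hr.trans h
  have hqn : q ^ n = -∑ ν ∈ Finset.range (p + 1), q ^ ν * a ν :=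
    eq_neg_of_add_eq_zero_left hq
  have h1 : ‖q‖ ^ n ≤ ∑ ν ∈ Finset.range n, ‖a ν‖ * ‖q‖ ^ ν := by
    calc ‖q‖ ^ n = ‖q ^ n‖ := (norm_pow q n).symm
      _ = ‖∑ ν ∈ Finset.range (p + 1), q ^ ν * a ν‖ := by rw [hqn, norm_neg]
      _ ≤ ∑ ν ∈ Finset.range (p + 1), ‖q ^ ν * a ν‖ := norm_sum_le _ _
      _ = ∑ ν ∈ Finset.range (p + 1), ‖a ν‖ * ‖q‖ ^ ν := by
          refine Finset.sum_congr rfl fun ν _ => ?_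
          rw [norm_mul, norm_pow, mul_comm]
      _ ≤ ∑ ν ∈ Finset.range n, ‖a ν‖ * ‖q‖ ^ ν := by
          refine Finset.sum_le_sum_of_subset_of_nonneg
            (Finset.range_subset_range.mpr hpn) fun i _ _ => ?_
          positivity
  have h2 : ‖q‖ ^ n ≤ (∑ ν ∈ Finset.range n, ‖a ν‖ / r ^ (n - 1 - ν)) * ‖q‖ ^ (n - 1) := by
    rw [Finset.sum_mul]
    refine h1.trans (Finset.sum_le_sum fun ν hν => ?_)
    have hνn : ν < n := Finset.mem_range.mp hν
    have key : ‖q‖ ^ ν * r ^ (n - 1 - ν) ≤ ‖q‖ ^ (n - 1) := by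
      calc ‖q‖ ^ ν * r ^ (n - 1 - ν) ≤ ‖q‖ ^ ν * ‖q‖ ^ (n - 1 - ν) := by
            gcongr
        _ = ‖q‖ ^ (n - 1) := by rw [← pow_add]; congr 1; omega
    rw [div_mul_eq_mul_div, le_div_iff₀ (pow_pos hr _), mul_assoc]
    gcongr
  have h3 : ‖q‖ ≤ ∑ ν ∈ Finset.range n, ‖a ν‖ / r ^ (n - 1 - ν) := by
    have hp : (0:ℝ) < ‖q‖ ^ (n - 1) := pow_pos hq0 _
    rw [← mul_le_mul_iff_of_pos_right hp]
    refine le_trans (le_of_eq ?_) h2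
    rw [← pow_succ']
    congr 1
    omega
  have hS : (∑ k ∈ Finset.Icc 1 n, ‖a (n - k)‖ / r ^ (k - 1))
      = ∑ ν ∈ Finset.range n, ‖a ν‖ / r ^ (n - 1 - ν) := by
    rw [show Finset.Icc 1 n = Finset.Ico 1 (n + 1) by rw [Finset.Ico_add_one_right_eq_Icc],
      Finset.sum_Ico_eq_sum_range,
      ← Finset.sum_range_reflect (fun ν => ‖a ν‖ / r ^ (n - 1 - ν)) n]
    refine Finset.sum_congr (by congr 1) fun i hi => ?_
    have hi' := Finset.mem_range.mp hi
    have e1 : n - (1 + i) = n - 1 - i := by omega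
    have e2 : n - 1 - (n - 1 - i) = 1 + i - 1 := by omega
    simp only [e1, e2]
  rw [hS]
  exact le_max_of_le_right h3
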